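/- Let Λ > 0, K ≥ 1, u₁ > 0, and set α := (1/2)√(ΛK/3), r_c⁻ := √(3/(ΛK)), so that 1/(2α) = r_c⁻. Let r : [0,u₁] → ℝ be differentiable with −(1/2)(K − (Λ/3) r(u)²) ≤ r'(u) ≤ −(1/2)(1 − (ΛK/3) r(u)²) for all u ∈ [0,u₁], and suppose 0 ≤ r(u₁) =: r₁ < r_c⁻. Define c⁻ := u₁ + (1/α)·artanh(2α r₁) and c⁺ := u₁ + (1/α)·artanh(2α r₁/K). Then for every u ∈ [0,u₁], (1/(2α))·tanh(α(c⁻ − u)) ≤ r(u) ≤ (K/(2α))·tanh(α(c⁺ − u)). -/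

import Mathlib

noncomputable section

open Real Set

/-- Inverse hyperbolic tangent: `artanh y = (1/2)·log((1+y)/(1−y))`. -/
def artanh (y : ℝ) : ℝ := (1 / 2) * Real.log ((1 + y) / (1 - y))

lemma my_tanh_artanh {y : ℝ} (h1 : -1 < y) (h2 : y < 1) : Real.tanh (_root_.artanh y) = y := by
  have hy1 : (0:ℝ) < 1 + y := by linarith
  have hy2 : (0:ℝ) < 1 - y := by linarith
  have ht : (0:ℝ) < (1 + y) / (1 - y) := div_pos hy1 hy2
  have hexp : Real.exp (_root_.artanh y) ^ 2 = (1 + y) / (1 - y) := by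
    rw [sq, ← Real.exp_add]
    have : _root_.artanh y + _root_.artanh y = Real.log ((1 + y) / (1 - y)) := by
      unfold _root_.artanh; ring
    rw [this, Real.exp_log ht]
  set E := Real.exp (_root_.artanh y) with hE
  have hEpos : 0 < E := Real.exp_pos _
  have hne : E ≠ 0 := hEpos.ne'
  have hsq : E ^ 2 * (1 - y) = 1 + y := by
    rw [hexp]; field_simp
  rw [Real.tanh_eq_sinh_div_cosh, Real.sinh_eq, Real.cosh_eq, Real.exp_neg, ← hE]
  have hden : 0 < E + E⁻¹ := by positivity
  rw [div_eq_iff (ne_of_gt (by positivity : (0:ℝ) < (E + E⁻¹) / 2))]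
  field_simp
  nlinarith [hsq]

lemma my_hasDerivAt_tanh (x : ℝ) : HasDerivAt Real.tanh (1 - Real.tanh x ^ 2) x := by
  have h := (Real.hasDerivAt_sinh x).div (Real.hasDerivAt_cosh x) (Real.cosh_pos x).ne'
  have heq : Real.tanh = fun x => Real.sinh x / Real.cosh x :=
    funext fun x => Real.tanh_eq_sinh_div_cosh x
  rw [heq]
  refine h.congr_deriv ?_
  have hc : Real.cosh x ≠ 0 := (Real.cosh_pos x).ne'
  have hid := Real.cosh_sq_sub_sinh_sq x
  beta_reduce
  field_simp

lemma my_abs_tanh_le_one (x : ℝ) : |Real.tanh x| ≤ 1 := by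
  rw [Real.tanh_eq_sinh_div_cosh, abs_div, abs_of_pos (Real.cosh_pos x)]
  rw [div_le_one (Real.cosh_pos x)]
  nlinarith [Real.cosh_sq_sub_sinh_sq x, abs_nonneg (Real.sinh x), sq_abs (Real.sinh x),
    Real.cosh_pos x]

lemma barrier_hasDerivAt (α β c u : ℝ) :
    HasDerivAt (fun u => β * Real.tanh (α * (c - u)))
      (-(β * α) * (1 - Real.tanh (α * (c - u)) ^ 2)) u := by
  have h1 : HasDerivAt (fun u : ℝ => α * (c - u)) (-α) u := by
    simpa using ((hasDerivAt_id u).const_sub c).const_mul α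
  have h2 := (my_hasDerivAt_tanh (α * (c - u))).comp u h1
  have h3 := h2.const_mul β
  refine h3.congr_deriv ?_
  ring

lemma nonpos_of_deriv_ge_neg_abs (a b L : ℝ) (w w' : ℝ → ℝ)
    (hd : ∀ t ∈ Icc a b, HasDerivWithinAt w (w' t) (Icc a b) t)
    (hend : w b ≤ 0)
    (hw : ∀ t ∈ Icc a b, -(L * |w t|) ≤ w' t) :
    ∀ t ∈ Icc a b, w t ≤ 0 := by
  intro t₀ ht₀
  by_contra hpos
  push_neg at hpos
  have hcont : ContinuousOn w (Icc a b) := fun t ht => (hd t ht).continuousWithinAt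
  set S := Icc t₀ b ∩ w ⁻¹' Iic 0 with hS
  have hbS : b ∈ S := ⟨⟨ht₀.2, le_refl b⟩, hend⟩
  have hSne : S.Nonempty := ⟨b, hbS⟩
  have hbdd : BddBelow S := ⟨t₀, fun x hx => hx.1.1⟩
  have hSclosed : IsClosed S := by
    have h1 : ContinuousOn w (Icc t₀ b) := hcont.mono (Icc_subset_Icc ht₀.1 le_rfl)
    exact h1.preimage_isClosed_of_isClosed isClosed_Icc isClosed_Iic
  set s := sInf S with hs
  have hsS : s ∈ S := hSclosed.csInf_mem hSne hbdd
  have hsb : s ≤ b := hsS.1.2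
  have hws : w s ≤ 0 := hsS.2
  have ht₀le : t₀ ≤ s := le_csInf hSne fun x hx => hx.1.1
  have ht₀s : t₀ < s := lt_of_le_of_ne ht₀le (by
    intro h; rw [← h] at hws; linarith)
  have hposIco : ∀ t ∈ Ico t₀ s, 0 < w t := by
    intro t ht
    by_contra h
    push_neg at h
    have htS : t ∈ S := ⟨⟨ht.1, ht.2.le.trans hsb⟩, h⟩
    exact absurd (csInf_le hbdd htS) (not_le.2 ht.2)
  set ψ := fun t => w t * Real.exp (L * t) with hψ
  have hsub2 : Icc t₀ s ⊆ Icc a b := Icc_subset_Icc ht₀.1 hsb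
  have hDA : ∀ t ∈ Ioo t₀ s, HasDerivAt ψ ((w' t + L * w t) * Real.exp (L * t)) t := by
    intro t ht
    have htmem : t ∈ Icc a b := ⟨ht₀.1.trans ht.1.le, ht.2.le.trans hsb⟩
    have htab : Icc a b ∈ nhds t :=
      Icc_mem_nhds (lt_of_le_of_lt ht₀.1 ht.1) (lt_of_lt_of_le ht.2 hsb)
    have h1 : HasDerivAt w (w' t) t := (hd t htmem).hasDerivAt htab
    have h2 : HasDerivAt (fun t : ℝ => Real.exp (L * t)) (Real.exp (L * t) * (L * 1)) t :=
      ((hasDerivAt_id t).const_mul L).exp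
    have h3 := h1.mul h2
    refine h3.congr_deriv ?_
    ring
  have hmono : MonotoneOn ψ (Icc t₀ s) := by
    apply monotoneOn_of_deriv_nonneg (convex_Icc _ _)
    · exact ContinuousOn.mul (hcont.mono hsub2)
        (Real.continuous_exp.comp (continuous_const.mul continuous_id)).continuousOn
    · rw [interior_Icc]
      exact fun t ht => (hDA t ht).differentiableAt.differentiableWithinAt
    · rw [interior_Icc]
      intro t ht
      rw [(hDA t ht).deriv]
      have hwt : 0 < w t := hposIco t ⟨ht.1.le, ht.2⟩
      have habs : |w t| = w t := abs_of_pos hwt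
      have hb := hw t ⟨ht₀.1.trans ht.1.le, ht.2.le.trans hsb⟩
      rw [habs] at hb
      have hnn : 0 ≤ w' t + L * w t := by linarith
      exact mul_nonneg hnn (Real.exp_pos _).le
  have h1 : ψ t₀ ≤ ψ s := hmono ⟨le_rfl, ht₀le⟩ ⟨ht₀le, le_rfl⟩ ht₀le
  have h2 : ψ s ≤ 0 := by
    have := Real.exp_pos (L * s)
    simp only [hψ]
    nlinarith
  have h3 : 0 < ψ t₀ := mul_pos hpos (Real.exp_pos _)
  linarith

set_option maxHeartbeats 1000000 in
/-- Bounds for characteristics in the local region `r₁ < r_c⁻`: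
a differentiable `r` with `−(1/2)(K − (Λ/3)r²) ≤ r' ≤ −(1/2)(1 − (ΛK/3)r²)` on `[0,u₁]`
and `0 ≤ r(u₁) = r₁ < r_c⁻ = √(3/(ΛK))` is sandwiched between explicit tanh profiles,
with `α = (1/2)√(ΛK/3)`, `c⁻ = u₁ + artanh(2αr₁)/α`, `c⁺ = u₁ + artanh(2αr₁/K)/α`. -/
theorem characteristics_local_region
    (Λ K u₁ : ℝ) (hΛ : 0 < Λ) (hK : 1 ≤ K) (hu : 0 < u₁)
    (r r' : ℝ → ℝ)
    (hd : ∀ u ∈ Icc (0:ℝ) u₁, HasDerivWithinAt r (r' u) (Icc 0 u₁) u)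
    (hlow : ∀ u ∈ Icc (0:ℝ) u₁, -(1 / 2) * (K - Λ / 3 * r u ^ 2) ≤ r' u)
    (hhigh : ∀ u ∈ Icc (0:ℝ) u₁, r' u ≤ -(1 / 2) * (1 - Λ * K / 3 * r u ^ 2))
    (hr₁0 : 0 ≤ r u₁) (hr₁ : r u₁ < Real.sqrt (3 / (Λ * K)))
    (α cm cp : ℝ)
    (hα : α = (1 / 2) * Real.sqrt (Λ * K / 3))
    (hcm : cm = u₁ + (1 / α) * _root_.artanh (2 * α * r u₁))
    (hcp : cp = u₁ + (1 / α) * _root_.artanh (2 * α * r u₁ / K)) :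
    ∀ u ∈ Icc (0:ℝ) u₁,
      (1 / (2 * α)) * Real.tanh (α * (cm - u)) ≤ r u ∧
      r u ≤ (K / (2 * α)) * Real.tanh (α * (cp - u)) := by
  have hK0 : (0:ℝ) < K := lt_of_lt_of_le one_pos hK
  have hKne : K ≠ 0 := hK0.ne'
  have hc : (0:ℝ) < Λ * K / 3 := by positivity
  have hsqrtpos : 0 < Real.sqrt (Λ * K / 3) := Real.sqrt_pos.2 hc
  have hαpos : 0 < α := by rw [hα]; linarith
  have hαne : α ≠ 0 := hαpos.ne'
  have h2α : 2 * α = Real.sqrt (Λ * K / 3) := by rw [hα]; ring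
  have hsq : (2 * α) ^ 2 = Λ * K / 3 := by rw [h2α, Real.sq_sqrt hc.le]
  have h2αpos : (0:ℝ) < 2 * α := by linarith
  -- r₁ bounds
  have hrc : Real.sqrt (3 / (Λ * K)) = 1 / (2 * α) := by
    have h3 : (3:ℝ) / (Λ * K) = (Λ * K / 3)⁻¹ := (inv_div (Λ * K) 3).symm
    rw [h3, Real.sqrt_inv, ← h2α, one_div]
  have hr₁lt : r u₁ < 1 / (2 * α) := by rw [← hrc]; exact hr₁
  have hy1 : 2 * α * r u₁ < 1 := by
    rw [lt_div_iff₀ h2αpos] at hr₁lt; linarith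
  have hy0 : 0 ≤ 2 * α * r u₁ := mul_nonneg h2αpos.le hr₁0
  have hyK1 : 2 * α * r u₁ / K < 1 := by rw [div_lt_one hK0]; linarith
  have hyK0 : 0 ≤ 2 * α * r u₁ / K := div_nonneg hy0 hK0.le
  -- endpoint values
  have hgm : Real.tanh (α * (cm - u₁)) = 2 * α * r u₁ := by
    have harg : α * (cm - u₁) = _root_.artanh (2 * α * r u₁) := by
      rw [hcm]; field_simp; ring
    rw [harg]; exact my_tanh_artanh (by linarith) hy1
  have hgp : Real.tanh (α * (cp - u₁)) = 2 * α * r u₁ / K := by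
    have harg : α * (cp - u₁) = _root_.artanh (2 * α * r u₁ / K) := by
      rw [hcp]; field_simp; ring
    rw [harg]; exact my_tanh_artanh (by linarith) hyK1
  -- bound on r
  obtain ⟨Cr, hCr⟩ := isCompact_Icc.exists_bound_of_continuousOn
    (fun t ht => (hd t ht).continuousWithinAt)
  have hCr' : ∀ u ∈ Icc (0:ℝ) u₁, |r u| ≤ |Cr| := fun u hu =>
    le_trans (by simpa [Real.norm_eq_abs] using hCr u hu) (le_abs_self Cr)
  set M := |Cr| + K / (2 * α) with hM
  have hMnn : 0 ≤ M := by positivity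
  set L := Λ * K / 6 * M with hL
  -- LOWER BOUND
  have key_lower := nonpos_of_deriv_ge_neg_abs 0 u₁ L
    (fun u => (1 / (2 * α)) * Real.tanh (α * (cm - u)) - r u)
    (fun u => -((1 / (2 * α)) * α) * (1 - Real.tanh (α * (cm - u)) ^ 2) - r' u)
    (fun t ht => ((barrier_hasDerivAt α (1 / (2 * α)) cm t).hasDerivWithinAt).sub (hd t ht))
    (by
      show (1 / (2 * α)) * Real.tanh (α * (cm - u₁)) - r u₁ ≤ 0
      rw [hgm]
      have heq : (1 / (2 * α)) * (2 * α * r u₁) = r u₁ := by field_simp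
      rw [heq]; simp)
    (by
      intro u hu
      show -(L * |(1 / (2 * α)) * Real.tanh (α * (cm - u)) - r u|) ≤
        -((1 / (2 * α)) * α) * (1 - Real.tanh (α * (cm - u)) ^ 2) - r' u
      set T := Real.tanh (α * (cm - u)) with hT
      set G := (1 / (2 * α)) * T with hG
      have e2 : 2 * α * G = T := by rw [hG]; field_simp
      have hT2G : T ^ 2 = Λ * K / 3 * G ^ 2 := by
        rw [← hsq, ← mul_pow, e2]
      have hhalf : (1 / (2 * α)) * α = 1 / 2 := by field_simp
      have h3 : Λ * K / 6 * (G ^ 2 - r u ^ 2) ≤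
          -((1 / (2 * α)) * α) * (1 - T ^ 2) - r' u := by
        rw [hhalf]
        linarith [hT2G, hhigh u hu]
      have hTabs : |T| ≤ 1 := my_abs_tanh_le_one (α * (cm - u))
      have hGabs : |G| ≤ K / (2 * α) := by
        rw [hG, abs_mul, abs_of_pos (by positivity : (0:ℝ) < 1 / (2 * α))]
        have ha : (1 / (2 * α)) * |T| ≤ (1 / (2 * α)) * 1 :=
          mul_le_mul_of_nonneg_left hTabs (by positivity)
        have hb : (1:ℝ) / (2 * α) ≤ K / (2 * α) := by gcongr
        linarith
      have hsum : |G + r u| ≤ M := by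
        calc |G + r u| ≤ |G| + |r u| := abs_add_le _ _
          _ ≤ K / (2 * α) + |Cr| := add_le_add hGabs (hCr' u hu)
          _ = M := by rw [hM]; ring
      have hprod : |(G + r u) * (G - r u)| ≤ M * |G - r u| := by
        rw [abs_mul]; exact mul_le_mul_of_nonneg_right hsum (abs_nonneg _)
      have h5 : -(M * |G - r u|) ≤ (G + r u) * (G - r u) := by
        have := neg_abs_le ((G + r u) * (G - r u)); linarith
      have h6 : -(L * |G - r u|) ≤ Λ * K / 6 * ((G + r u) * (G - r u)) := by
        have hcoef : (0:ℝ) ≤ Λ * K / 6 := by positivity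
        have h7 := mul_le_mul_of_nonneg_left h5 hcoef
        calc -(L * |G - r u|) = Λ * K / 6 * -(M * |G - r u|) := by rw [hL]; ring
          _ ≤ _ := h7
      have hring : Λ * K / 6 * ((G + r u) * (G - r u)) = Λ * K / 6 * (G ^ 2 - r u ^ 2) := by
        ring
      linarith [h3, h6, hring.ge, hring.le])
  -- UPPER BOUND
  have key_upper := nonpos_of_deriv_ge_neg_abs 0 u₁ L
    (fun u => r u - (K / (2 * α)) * Real.tanh (α * (cp - u)))
    (fun u => r' u - -((K / (2 * α)) * α) * (1 - Real.tanh (α * (cp - u)) ^ 2))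
    (fun t ht => (hd t ht).sub ((barrier_hasDerivAt α (K / (2 * α)) cp t).hasDerivWithinAt))
    (by
      show r u₁ - (K / (2 * α)) * Real.tanh (α * (cp - u₁)) ≤ 0
      rw [hgp]
      have heq : (K / (2 * α)) * (2 * α * r u₁ / K) = r u₁ := by field_simp
      rw [heq]; simp)
    (by
      intro u hu
      show -(L * |r u - (K / (2 * α)) * Real.tanh (α * (cp - u))|) ≤
        r' u - -((K / (2 * α)) * α) * (1 - Real.tanh (α * (cp - u)) ^ 2)
      set T := Real.tanh (α * (cp - u)) with hT
      set H := (K / (2 * α)) * T with hH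
      have e2 : 2 * α * H = K * T := by rw [hH]; field_simp
      have hKT : (K * T) ^ 2 = Λ * K / 3 * H ^ 2 := by
        rw [← e2, mul_pow, hsq]
      have hT2H : K * T ^ 2 = Λ / 3 * H ^ 2 :=
        mul_left_cancel₀ hKne (by linear_combination hKT)
      have hhalfK : (K / (2 * α)) * α = K / 2 := by field_simp
      have h3 : Λ / 6 * (r u ^ 2 - H ^ 2) ≤
          r' u - -((K / (2 * α)) * α) * (1 - T ^ 2) := by
        rw [hhalfK]
        linarith [hT2H, hlow u hu]
      have hTabs : |T| ≤ 1 := my_abs_tanh_le_one (α * (cp - u))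
      have hHabs : |H| ≤ K / (2 * α) := by
        rw [hH, abs_mul, abs_of_pos (by positivity : (0:ℝ) < K / (2 * α))]
        have ha : (K / (2 * α)) * |T| ≤ (K / (2 * α)) * 1 :=
          mul_le_mul_of_nonneg_left hTabs (by positivity)
        linarith
      have hsum : |r u + H| ≤ M := by
        calc |r u + H| ≤ |r u| + |H| := abs_add_le _ _
          _ ≤ |Cr| + K / (2 * α) := add_le_add (hCr' u hu) hHabs
          _ = M := by rw [hM]
      have h5 : -(M * |r u - H|) ≤ (r u + H) * (r u - H) := by
        have h5a : |(r u + H) * (r u - H)| ≤ M * |r u - H| := by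
          rw [abs_mul]; exact mul_le_mul_of_nonneg_right hsum (abs_nonneg _)
        have := neg_abs_le ((r u + H) * (r u - H)); linarith
      have h6 : -(Λ / 6 * M * |r u - H|) ≤ Λ / 6 * ((r u + H) * (r u - H)) := by
        have hcoef : (0:ℝ) ≤ Λ / 6 := by positivity
        have h7 := mul_le_mul_of_nonneg_left h5 hcoef
        calc -(Λ / 6 * M * |r u - H|) = Λ / 6 * -(M * |r u - H|) := by ring
          _ ≤ _ := h7
      have h8 : -(L * |r u - H|) ≤ -(Λ / 6 * M * |r u - H|) := by
        have hnn : 0 ≤ Λ / 6 * (K - 1) * M * |r u - H| :=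
          mul_nonneg (mul_nonneg (mul_nonneg (by positivity) (by linarith)) hMnn)
            (abs_nonneg _)
        rw [hL]; linarith [hnn]
      have hring : Λ / 6 * ((r u + H) * (r u - H)) = Λ / 6 * (r u ^ 2 - H ^ 2) := by
        ring
      linarith [h3, h6, h8, hring.ge, hring.le])
  intro u hu
  constructor
  · have h := key_lower u hu
    linarith
  · have h := key_upper u hu
    linarith
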